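/- If W_n is the wheel on n ≥ 5 vertices (a cycle on n−1 vertices plus a universal hub vertex), then d(W_n) = ⌈n/2⌉. -/

import Mathlib

set_option maxHeartbeats 400000


open Finset in
/-- One stage of the deduction game.  The state is a pair `(P, F)` where `P` is the set of
protected vertices and `F` is the set of vertices whose initial searchers have already fired
(moved).  A vertex `v` is fireable if it is occupied, has not yet fired, and the number of
searchers on it (in the initial layout `L`) is at least its number of unprotected neighbours.
All fireable vertices fire simultaneously: one searcher moves to each unprotected neighbour,
which thereby becomes protected. -/
def dedStep {V : Type*} [Fintype V] [DecidableEq V] (G : SimpleGraph V) [DecidableRel G.Adj]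
    (L : V → ℕ) (s : Finset V × Finset V) : Finset V × Finset V :=
  let fire : Finset V := univ.filter (fun v =>
    0 < L v ∧ v ∉ s.2 ∧ (univ.filter (fun u => G.Adj v u ∧ u ∉ s.1)).card ≤ L v)
  (s.1 ∪ fire.biUnion (fun v => univ.filter (fun u => G.Adj v u ∧ u ∉ s.1)), s.2 ∪ fire)

open Finset in
/-- A layout `L` (assigning a number of searchers to each vertex) is successful if, starting
from the initially occupied vertices being protected and no vertex having fired, iterating the
deduction stages eventually protects every vertex. -/
def DedSuccessful {V : Type*} [Fintype V] [DecidableEq V] (G : SimpleGraph V)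
    [DecidableRel G.Adj] (L : V → ℕ) : Prop :=
  ∃ k : ℕ, ((dedStep G L)^[k] (univ.filter (fun v => 0 < L v), ∅)).1 = univ

/-- The deduction number of `G`: the minimum number of searchers in a successful layout. -/
noncomputable def deductionNumber {V : Type*} [Fintype V] (G : SimpleGraph V) : ℕ :=
  letI := Classical.decEq V
  letI := Classical.decRel G.Adj
  sInf {n | ∃ L : V → ℕ, (∑ v, L v) = n ∧ DedSuccessful G L}

/-- The wheel on `n` vertices: a cycle on `n - 1` vertices together with a universal
hub vertex. -/
def wheelGraph (n : ℕ) : SimpleGraph (Unit ⊕ Fin (n - 1)) :=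
  SimpleGraph.fromRel (fun a b => match a, b with
    | Sum.inl _, Sum.inr _ => True
    | Sum.inr i, Sum.inr j => (SimpleGraph.cycleGraph (n - 1)).Adj i j
    | _, _ => False)


namespace DedAux

open Finset

/- ## general lower bound -/

lemma ded_lower {V : Type*} [Fintype V] [DecidableEq V] (G : SimpleGraph V)
    [DecidableRel G.Adj] (L : V → ℕ) (h : DedSuccessful G L) :
    Fintype.card V ≤ 2 * ∑ v, L v := by
  classical
  obtain ⟨k, hk⟩ := h
  set occ := univ.filter (fun v => 0 < L v) with hocc
  have key : ∀ j : ℕ, (((dedStep G L)^[j] (occ, ∅)).1).card ≤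
      occ.card + ∑ v ∈ ((dedStep G L)^[j] (occ, ∅)).2, L v := by
    intro j
    induction j with
    | zero => simp
    | succ j ih =>
      rw [Function.iterate_succ_apply']
      set s := (dedStep G L)^[j] (occ, ∅) with hs
      set fire := univ.filter (fun v =>
        0 < L v ∧ v ∉ s.2 ∧ (univ.filter (fun u => G.Adj v u ∧ u ∉ s.1)).card ≤ L v) with hfire
      have hstep : dedStep G L s =
          (s.1 ∪ fire.biUnion (fun v => univ.filter (fun u => G.Adj v u ∧ u ∉ s.1)),
            s.2 ∪ fire) := rfl
      rw [hstep]
      have hdisj : Disjoint s.2 fire := by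
        rw [Finset.disjoint_right]
        intro v hv
        rw [hfire, mem_filter] at hv
        exact fun hv2 => hv.2.2.1 hv2
      have h1 : (s.1 ∪ fire.biUnion (fun v => univ.filter (fun u => G.Adj v u ∧ u ∉ s.1))).card
          ≤ s.1.card + ∑ v ∈ fire, L v := by
        refine (card_union_le _ _).trans ?_
        gcongr
        refine card_biUnion_le.trans ?_
        refine Finset.sum_le_sum ?_
        intro v hv
        rw [hfire, mem_filter] at hv
        exact hv.2.2.2
      calc (s.1 ∪ fire.biUnion (fun v => univ.filter (fun u => G.Adj v u ∧ u ∉ s.1))).card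
          ≤ s.1.card + ∑ v ∈ fire, L v := h1
        _ ≤ occ.card + ∑ v ∈ s.2, L v + ∑ v ∈ fire, L v := by gcongr
        _ = occ.card + ∑ v ∈ s.2 ∪ fire, L v := by rw [Finset.sum_union hdisj]; ring
  have h2 := key k
  rw [hk] at h2
  have h3 : ∑ v ∈ ((dedStep G L)^[k] (occ, ∅)).2, L v ≤ ∑ v, L v :=
    Finset.sum_le_sum_of_subset (Finset.subset_univ _)
  have h4 : occ.card ≤ ∑ v, L v := by
    calc occ.card = ∑ v ∈ occ, 1 := by simp
      _ ≤ ∑ v ∈ occ, L v := by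
          refine Finset.sum_le_sum ?_
          intro v hv
          rw [hocc, mem_filter] at hv
          omega
      _ ≤ ∑ v, L v := Finset.sum_le_sum_of_subset (Finset.subset_univ _)
  have h5 : univ.card = Fintype.card V := rfl
  omega

/- ## helpers -/

instance sumElimDecidable {α β : Type*} (p : α → Prop) (q : β → Prop)
    [DecidablePred p] [DecidablePred q] : DecidablePred (Sum.elim p q)
  | Sum.inl a => inferInstanceAs (Decidable (p a))
  | Sum.inr b => inferInstanceAs (Decidable (q b))

lemma two_le_card_filter {V : Type*} [DecidableEq V] [Fintype V] {p : V → Prop}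
    [DecidablePred p] {x y : V} (hxy : x ≠ y) (hx : p x) (hy : p y) :
    2 ≤ (univ.filter p).card := by
  have hsub : ({x, y} : Finset V) ⊆ univ.filter p := by
    intro z hz
    simp only [mem_insert, mem_singleton] at hz
    rcases hz with rfl | rfl <;> simp [hx, hy]
  calc 2 = ({x, y} : Finset V).card := (card_pair hxy).symm
    _ ≤ _ := card_le_card hsub

lemma three_le_card_filter {V : Type*} [DecidableEq V] [Fintype V] {p : V → Prop}
    [DecidablePred p] {x y z : V} (hxy : x ≠ y) (hxz : x ≠ z) (hyz : y ≠ z)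
    (hx : p x) (hy : p y) (hz : p z) : 3 ≤ (univ.filter p).card := by
  have hsub : ({x, y, z} : Finset V) ⊆ univ.filter p := by
    intro w hw
    simp only [mem_insert, mem_singleton] at hw
    rcases hw with rfl | rfl | rfl <;> simp [hx, hy, hz]
  calc 3 = ({x, y, z} : Finset V).card := by
        rw [card_insert_of_notMem (by simp [hxy, hxz]), card_pair hyz]
    _ ≤ _ := card_le_card hsub

lemma card_filter_le_two {V : Type*} [DecidableEq V] [Fintype V] {p : V → Prop}
    [DecidablePred p] {x y : V} (h : ∀ u, p u → u = x ∨ u = y) :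
    (univ.filter p).card ≤ 2 := by
  have hsub : univ.filter p ⊆ {x, y} := by
    intro u hu
    rw [mem_filter] at hu
    simpa only [mem_insert, mem_singleton] using h u hu.2
  calc (univ.filter p).card ≤ ({x, y} : Finset V).card := card_le_card hsub
    _ ≤ 2 := by
        refine (card_insert_le _ _).trans ?_
        simp

/- ## adjacency -/

lemma cyc_adj {m : ℕ} (hm : 3 ≤ m) {i j : Fin m} :
    (SimpleGraph.cycleGraph m).Adj i j ↔
      (i.val + 1 = j.val ∨ j.val + 1 = i.val ∨ (i.val = 0 ∧ j.val + 1 = m) ∨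
        (j.val = 0 ∧ i.val + 1 = m)) := by
  have hi := i.isLt
  have hj := j.isLt
  have key : ∀ a b : Fin m, ((a - b).val = 1 ↔
      (b.val + 1 = a.val ∨ (a.val = 0 ∧ b.val + 1 = m))) := by
    intro a b
    rw [Fin.sub_def]
    have ha := a.isLt
    have hb := b.isLt
    simp only [Fin.val_mk]
    have h1 : (m - b.val + a.val) % m =
        if m - b.val + a.val < m then m - b.val + a.val else m - b.val + a.val - m := by
      split
      · exact Nat.mod_eq_of_lt ‹_›
      · rw [Nat.mod_eq_sub_mod (by omega)]
        exact Nat.mod_eq_of_lt (by omega)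
    rw [h1]
    split <;> omega
  rw [SimpleGraph.cycleGraph_adj', key, key]
  omega

lemma wheel_adj_lr {n : ℕ} (u : Unit) (j : Fin (n-1)) :
    (wheelGraph n).Adj (Sum.inl u) (Sum.inr j) := by
  rw [wheelGraph, SimpleGraph.fromRel_adj]
  exact ⟨by simp, Or.inl trivial⟩

lemma wheel_adj_ll {n : ℕ} (u u' : Unit) : ¬ (wheelGraph n).Adj (Sum.inl u) (Sum.inl u') := by
  rw [wheelGraph, SimpleGraph.fromRel_adj]
  rintro ⟨h1, h2 | h2⟩ <;> exact h2

lemma wheel_adj_rr {n : ℕ} (hn : 5 ≤ n) {i j : Fin (n-1)} :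
    (wheelGraph n).Adj (Sum.inr i) (Sum.inr j) ↔
      (i.val + 1 = j.val ∨ j.val + 1 = i.val ∨ (i.val = 0 ∧ j.val + 1 = n - 1) ∨
        (j.val = 0 ∧ i.val + 1 = n - 1)) := by
  rw [wheelGraph, SimpleGraph.fromRel_adj]
  have hm : 3 ≤ n - 1 := by omega
  constructor
  · rintro ⟨hne, h | h⟩
    · have h' : (SimpleGraph.cycleGraph (n-1)).Adj i j := h
      rw [cyc_adj hm] at h'
      omega
    · have h' : (SimpleGraph.cycleGraph (n-1)).Adj j i := h
      rw [cyc_adj hm] at h'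
      omega
  · intro h
    have hne : i ≠ j := by
      intro he
      subst he
      have := i.isLt
      omega
    refine ⟨by simpa using hne, Or.inl ?_⟩
    show (SimpleGraph.cycleGraph (n-1)).Adj i j
    rw [cyc_adj hm]
    exact h

/- ## the layout -/

def occC (n : ℕ) (j : ℕ) : Prop :=
  (j % 4 ≤ 1 ∧ j < 4 * ((n-1)/4)) ∨ ((n-1) % 4 = 3 ∧ j = (n-1) - 4)
def pairC (n : ℕ) (j : ℕ) : Prop := j % 4 ≤ 1 ∧ j < 4 * ((n-1)/4)
def p1C (n : ℕ) (j : ℕ) : Prop :=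
  occC n j ∨ (j % 4 = 2 ∧ j < 4 * ((n-1)/4)) ∨ (j % 4 = 3 ∧ j + 1 < 4 * ((n-1)/4)) ∨
    j = (n-1) - 1
def f2C (n : ℕ) (j : ℕ) : Prop := pairC n j ∨ ((n-1) % 4 = 3 ∧ j = (n-1) - 4)
def p2C (n : ℕ) (j : ℕ) : Prop := (n-1) % 4 = 3 → (p1C n j ∨ j = (n-1) - 3)

instance (n : ℕ) : DecidablePred (occC n) := fun j => by unfold occC; infer_instance
instance (n : ℕ) : DecidablePred (pairC n) := fun j => by unfold pairC; infer_instance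
instance (n : ℕ) : DecidablePred (p1C n) := fun j => by unfold p1C; infer_instance
instance (n : ℕ) : DecidablePred (f2C n) := fun j => by unfold f2C; infer_instance
instance (n : ℕ) : DecidablePred (p2C n) := fun j => by unfold p2C; infer_instance

def wheelL (n : ℕ) : (Unit ⊕ Fin (n-1)) → ℕ :=
  Sum.elim (fun _ => if (n-1) % 4 = 2 then 2 else 1)
    (fun j => if occC n j.val then 1 else 0)

lemma count_pairs (N : ℕ) :
    ∑ j ∈ Finset.range N, (if j % 4 ≤ 1 then 1 else 0) = 2 * (N/4) + min (N%4) 2 := by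
  induction N with
  | zero => simp
  | succ N ih => rw [Finset.sum_range_succ, ih]; split <;> omega

lemma wheelL_sum {n : ℕ} (hn : 5 ≤ n) : ∑ v, wheelL n v = (n + 1) / 2 := by
  rw [Fintype.sum_sum_type]
  have hm4 : 4 ≤ n - 1 := by omega
  have ha : 0 < (n-1) / 4 := by omega
  have hsum2 : ∑ j : Fin (n-1), wheelL n (Sum.inr j) =
      ∑ j ∈ Finset.range (n-1),
        (if (j % 4 ≤ 1 ∧ j < 4 * ((n-1)/4)) ∨ ((n-1) % 4 = 3 ∧ j = (n-1) - 4)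
        then 1 else 0) := by
    rw [← Fin.sum_univ_eq_sum_range]
    exact Finset.sum_congr rfl (fun j _ => rfl)
  have hsplit : ∀ j ∈ Finset.range (n-1),
      (if (j % 4 ≤ 1 ∧ j < 4 * ((n-1)/4)) ∨ ((n-1) % 4 = 3 ∧ j = (n-1) - 4) then 1 else 0) =
      ((if j % 4 ≤ 1 ∧ j < 4 * ((n-1)/4) then 1 else 0) +
        (if (n-1) % 4 = 3 ∧ j = (n-1) - 4 then 1 else 0) : ℕ) := by
    intro j hj
    split_ifs <;> omega
  rw [hsum2, Finset.sum_congr rfl hsplit, Finset.sum_add_distrib]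
  have h1 : ∑ j ∈ Finset.range (n-1), (if j % 4 ≤ 1 ∧ j < 4 * ((n-1)/4) then 1 else 0) =
      2 * ((n-1)/4) := by
    have hsub : Finset.range (4 * ((n-1)/4)) ⊆ Finset.range (n-1) := by
      apply Finset.range_subset_range.2; omega
    rw [← Finset.sum_subset hsub (by intro x hx hx2; simp at hx hx2 ⊢; omega)]
    have heq : ∀ j ∈ Finset.range (4 * ((n-1)/4)),
        (if j % 4 ≤ 1 ∧ j < 4 * ((n-1)/4) then 1 else 0) = (if j % 4 ≤ 1 then 1 else 0 : ℕ) := by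
      intro j hj; simp at hj; split_ifs <;> omega
    rw [Finset.sum_congr rfl heq, count_pairs]
    omega
  have h2 : ∑ j ∈ Finset.range (n-1), (if (n-1) % 4 = 3 ∧ j = (n-1) - 4 then 1 else 0) =
      if (n-1) % 4 = 3 then 1 else 0 := by
    split_ifs with h
    · simp only [h, true_and]
      rw [Finset.sum_ite_eq' (Finset.range (n-1)) ((n-1)-4) (fun _ => 1)]
      simp
      omega
    · apply Finset.sum_eq_zero; intro x hx; simp [h]
  rw [h1, h2]
  have h3 : ∑ _u : Unit, wheelL n (Sum.inl _u) = if (n-1) % 4 = 2 then 2 else 1 := by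
    simp [wheelL]
  rw [h3]
  split_ifs <;> omega

/- ## simulation -/

lemma wheel_success (n : ℕ) (hn : 5 ≤ n) [instE : DecidableEq (Unit ⊕ Fin (n-1))]
    [instR : DecidableRel (wheelGraph n).Adj] : DedSuccessful (wheelGraph n) (wheelL n) := by
  set P0 : Finset (Unit ⊕ Fin (n-1)) :=
    univ.filter (Sum.elim (fun _ => True) (fun j => occC n j.val)) with hP0
  set F1 : Finset (Unit ⊕ Fin (n-1)) :=
    univ.filter (Sum.elim (fun _ => False) (fun j => pairC n j.val)) with hF1
  set P1 : Finset (Unit ⊕ Fin (n-1)) :=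
    univ.filter (Sum.elim (fun _ => True) (fun j => p1C n j.val)) with hP1
  set F2 : Finset (Unit ⊕ Fin (n-1)) :=
    univ.filter (Sum.elim (fun _ => (n-1) % 4 ≠ 3) (fun j => f2C n j.val)) with hF2
  set P2 : Finset (Unit ⊕ Fin (n-1)) :=
    univ.filter (Sum.elim (fun _ => True) (fun j => p2C n j.val)) with hP2
  have hstep : ∀ P F : Finset (Unit ⊕ Fin (n-1)), dedStep (wheelGraph n) (wheelL n) (P, F) =
      (P ∪ (univ.filter (fun v => 0 < wheelL n v ∧ v ∉ F ∧
          (univ.filter (fun u => (wheelGraph n).Adj v u ∧ u ∉ P)).card ≤ wheelL n v)).biUnion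
          (fun v => univ.filter (fun u => (wheelGraph n).Adj v u ∧ u ∉ P)),
        F ∪ univ.filter (fun v => 0 < wheelL n v ∧ v ∉ F ∧
          (univ.filter (fun u => (wheelGraph n).Adj v u ∧ u ∉ P)).card ≤ wheelL n v)) :=
    fun P F => rfl
  have hC0 : univ.filter (fun v => 0 < wheelL n v) = P0 := by
    ext v
    rcases v with u | j
    · simp only [mem_filter, mem_univ, true_and, hP0, Sum.elim_inl, iff_true]; simp only [wheelL, Sum.elim_inl]
      split_ifs <;> omega
    · simp only [mem_filter, mem_univ, true_and, hP0, Sum.elim_inr]; simp only [wheelL, Sum.elim_inr]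
      split_ifs with h <;> simp [h]
  have hubP0 : (Sum.inl () : Unit ⊕ Fin (n-1)) ∈ P0 := by
    simp only [hP0, mem_filter, mem_univ, true_and, Sum.elim_inl]
  have hfire1 : univ.filter (fun v => 0 < wheelL n v ∧ v ∉ (∅ : Finset (Unit ⊕ Fin (n-1))) ∧
      (univ.filter (fun u => (wheelGraph n).Adj v u ∧ u ∉ P0)).card ≤ wheelL n v) = F1 := by
    ext v
    simp only [mem_filter, mem_univ, true_and, notMem_empty, not_false_eq_true, true_and, hF1]
    rcases v with u | j
    · simp only [Sum.elim_inl, iff_false, wheelL]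
      rintro ⟨-, hcard⟩
      by_cases hr2 : (n-1) % 4 = 2
      · rw [if_pos hr2] at hcard
        have h3 : 3 ≤ (univ.filter
            (fun u' => (wheelGraph n).Adj (Sum.inl u) u' ∧ u' ∉ P0)).card := by
          refine three_le_card_filter (x := Sum.inr ⟨2, by omega⟩)
            (y := Sum.inr ⟨n-2, by omega⟩) (z := Sum.inr ⟨n-3, by omega⟩)
            (by simp only [ne_eq, Sum.inr.injEq, Fin.mk.injEq]; omega)
            (by simp only [ne_eq, Sum.inr.injEq, Fin.mk.injEq]; omega)
            (by simp only [ne_eq, Sum.inr.injEq, Fin.mk.injEq]; omega)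
            ⟨wheel_adj_lr _ _, ?_⟩ ⟨wheel_adj_lr _ _, ?_⟩ ⟨wheel_adj_lr _ _, ?_⟩ <;>
          · simp only [hP0, mem_filter, mem_univ, true_and, Sum.elim_inr, Fin.val_mk]; simp only [occC]
            omega
        omega
      · rw [if_neg hr2] at hcard
        have h3 : 2 ≤ (univ.filter
            (fun u' => (wheelGraph n).Adj (Sum.inl u) u' ∧ u' ∉ P0)).card := by
          refine two_le_card_filter (x := Sum.inr ⟨2, by omega⟩)
            (y := Sum.inr ⟨n-2, by omega⟩)
            (by simp only [ne_eq, Sum.inr.injEq, Fin.mk.injEq]; omega)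
            ⟨wheel_adj_lr _ _, ?_⟩ ⟨wheel_adj_lr _ _, ?_⟩ <;>
          · simp only [hP0, mem_filter, mem_univ, true_and, Sum.elim_inr, Fin.val_mk]; simp only [occC]
            omega
        omega
    · simp only [Sum.elim_inr, wheelL]
      have hj := j.isLt
      constructor
      · rintro ⟨hpos, hcard⟩
        split_ifs at hpos hcard with hocc
        swap
        · omega
        by_contra hnp
        have hlone : (n-1) % 4 = 3 ∧ j.val = (n-1) - 4 := by
          rcases hocc with h | h
          · exact absurd h hnp
          · exact h
        have h2c : 2 ≤ (univ.filter
            (fun u => (wheelGraph n).Adj (Sum.inr j) u ∧ u ∉ P0)).card := by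
          refine two_le_card_filter (x := Sum.inr ⟨n-6, by omega⟩)
            (y := Sum.inr ⟨n-4, by omega⟩)
            (by simp only [ne_eq, Sum.inr.injEq, Fin.mk.injEq]; omega)
            ⟨?_, ?_⟩ ⟨?_, ?_⟩
          · rw [wheel_adj_rr hn]
            simp only [Fin.val_mk]
            omega
          · simp only [hP0, mem_filter, mem_univ, true_and, Sum.elim_inr, Fin.val_mk]; simp only [occC]
            omega
          · rw [wheel_adj_rr hn]
            simp only [Fin.val_mk]
            omega
          · simp only [hP0, mem_filter, mem_univ, true_and, Sum.elim_inr, Fin.val_mk]; simp only [occC]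
            omega
        omega
      · intro hpair
        have hocc : occC n j.val := Or.inl hpair
        rw [if_pos hocc]
        refine ⟨Nat.one_pos, ?_⟩
        rw [card_le_one]
        intro x hx y hy
        simp only [mem_filter, mem_univ, true_and] at hx hy
        rcases x with u | i
        · exact absurd hubP0 (by cases u; exact hx.2)
        rcases y with u | i'
        · exact absurd hubP0 (by cases u; exact hy.2)
        obtain ⟨hadj, hnp⟩ := hx
        obtain ⟨hadj', hnp'⟩ := hy
        rw [wheel_adj_rr hn] at hadj hadj'
        simp only [hP0, mem_filter, mem_univ, true_and, Sum.elim_inr] at hnp hnp'; simp only [occC] at hnp hnp'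
        simp only [Sum.inr.injEq, Fin.ext_iff]
        unfold pairC at hpair
        have hi := i.isLt
        have hi' := i'.isLt
        omega
  have hbiU1 : P0 ∪ F1.biUnion
      (fun v => univ.filter (fun u => (wheelGraph n).Adj v u ∧ u ∉ P0)) = P1 := by
    ext w
    simp only [mem_union, mem_biUnion, mem_filter, mem_univ, true_and, hP0, hP1, hF1]
    rcases w with u | i
    · simp
    · simp only [Sum.elim_inr]
      have hi := i.isLt
      constructor
      · rintro (hocc | ⟨v, hv, hadj, hnp⟩)
        · exact Or.inl hocc
        · rcases v with u | jj
          · simp only [Sum.elim_inl] at hv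
          · simp only [Sum.elim_inr] at hv hnp
            rw [wheel_adj_rr hn] at hadj
            have hjj := jj.isLt
            unfold pairC at hv
            unfold occC at hnp
            unfold p1C occC
            omega
      · intro hp1
        unfold p1C at hp1
        rcases hp1 with hocc | h2 | h3 | h4
        · exact Or.inl hocc
        · refine Or.inr ⟨Sum.inr ⟨i.val - 1, by omega⟩, ?_, ?_, ?_⟩
          · simp only [Sum.elim_inr, pairC, Fin.val_mk]
            omega
          · rw [wheel_adj_rr hn]
            simp only [Fin.val_mk]
            omega
          · simp only [Sum.elim_inr, occC]
            omega
        · refine Or.inr ⟨Sum.inr ⟨i.val + 1, by omega⟩, ?_, ?_, ?_⟩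
          · simp only [Sum.elim_inr, pairC, Fin.val_mk]
            omega
          · rw [wheel_adj_rr hn]
            exact Or.inr (Or.inl (Fin.val_mk _).symm)
          · simp only [Sum.elim_inr, occC]
            omega
        · refine Or.inr ⟨Sum.inr ⟨0, by omega⟩, ?_, ?_, ?_⟩
          · simp only [Sum.elim_inr, pairC, Fin.val_mk]
            omega
          · rw [wheel_adj_rr hn]
            exact Or.inr (Or.inr (Or.inl ⟨Fin.val_mk _, by omega⟩))
          · simp only [Sum.elim_inr, occC]
            omega
  have hC1 : dedStep (wheelGraph n) (wheelL n) (P0, ∅) = (P1, F1) := by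
    rw [hstep P0 ∅, hfire1, hbiU1, empty_union]
  have hubP1 : (Sum.inl () : Unit ⊕ Fin (n-1)) ∈ P1 := by
    simp only [hP1, mem_filter, mem_univ, true_and, Sum.elim_inl]
  have hfire2 : univ.filter (fun v => 0 < wheelL n v ∧ v ∉ F1 ∧
      (univ.filter (fun u => (wheelGraph n).Adj v u ∧ u ∉ P1)).card ≤ wheelL n v) =
      univ.filter (Sum.elim (fun _ => (n-1) % 4 ≠ 3)
        (fun j : Fin (n-1) => (n-1) % 4 = 3 ∧ j.val = (n-1) - 4)) := by
    ext v
    simp only [mem_filter, mem_univ, true_and, hF1, Sum.elim_inl, Sum.elim_inr, not_false_eq_true,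
      wheelL]
    rcases v with u | j
    · simp only [Sum.elim_inl, Sum.elim_inr, mem_filter, mem_univ, true_and, not_false_eq_true]
      constructor
      · rintro ⟨-, hcard⟩
        intro hr3
        rw [if_neg (by omega)] at hcard
        have h2c : 2 ≤ (univ.filter
            (fun u' => (wheelGraph n).Adj (Sum.inl u) u' ∧ u' ∉ P1)).card := by
          refine two_le_card_filter (x := Sum.inr ⟨n-4, by omega⟩)
            (y := Sum.inr ⟨n-3, by omega⟩)
            (by simp only [ne_eq, Sum.inr.injEq, Fin.mk.injEq]; omega)
            ⟨wheel_adj_lr _ _, ?_⟩ ⟨wheel_adj_lr _ _, ?_⟩ <;>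
          · simp only [hP1, mem_filter, mem_univ, true_and, Sum.elim_inr, Fin.val_mk]
            unfold p1C occC
            omega
        omega
      · intro hr3
        refine ⟨by split_ifs <;> omega, ?_⟩
        by_cases hr2 : (n-1) % 4 = 2
        · rw [if_pos hr2]
          refine card_filter_le_two (x := Sum.inr ⟨n-4, by omega⟩)
            (y := Sum.inr ⟨n-3, by omega⟩) ?_
          intro w hw
          rcases w with u' | i
          · exact absurd hubP1 (by cases u'; exact hw.2)
          · obtain ⟨-, hnp⟩ := hw
            simp only [hP1, mem_filter, mem_univ, true_and, Sum.elim_inr] at hnp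
            unfold p1C occC at hnp
            have hi := i.isLt
            simp only [Sum.inr.injEq, Fin.ext_iff, Fin.val_mk]
            omega
        · rw [if_neg hr2]
          rw [card_le_one]
          have key : ∀ x, (wheelGraph n).Adj (Sum.inl u) x ∧ x ∉ P1 →
              x = Sum.inr (⟨n - 3, by omega⟩ : Fin (n-1)) := by
            rintro (u' | i) ⟨hadj, hnp⟩
            · exact absurd hubP1 (by cases u'; exact hnp)
            · simp only [hP1, mem_filter, mem_univ, true_and, Sum.elim_inr] at hnp
              unfold p1C occC at hnp
              have hi := i.isLt
              simp only [Sum.inr.injEq, Fin.ext_iff, Fin.val_mk]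
              omega
          intro x hx y hy
          simp only [mem_filter, mem_univ, true_and] at hx hy
          rw [key x hx, key y hy]
    · simp only [Sum.elim_inr]
      have hj := j.isLt
      constructor
      · rintro ⟨hpos, hnF, hcard⟩
        split_ifs at hpos with hocc
        swap
        · omega
        unfold occC at hocc
        unfold pairC at hnF
        constructor
        · omega
        · omega
      · rintro ⟨hr3, hjv⟩
        have hocc : occC n j.val := Or.inr ⟨hr3, hjv⟩
        rw [if_pos hocc]
        refine ⟨Nat.one_pos, by unfold pairC; omega, ?_⟩
        rw [card_le_one]
        have key : ∀ x, (wheelGraph n).Adj (Sum.inr j) x ∧ x ∉ P1 →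
            x = Sum.inr (⟨(n-1) - 3, by omega⟩ : Fin (n-1)) := by
          rintro (u' | i) ⟨hadj, hnp⟩
          · exact absurd hubP1 (by cases u'; exact hnp)
          · rw [wheel_adj_rr hn] at hadj
            simp only [hP1, mem_filter, mem_univ, true_and, Sum.elim_inr] at hnp
            unfold p1C occC at hnp
            have hi := i.isLt
            simp only [Sum.inr.injEq, Fin.ext_iff, Fin.val_mk]
            omega
        intro x hx y hy
        simp only [mem_filter, mem_univ, true_and] at hx hy
        rw [key x hx, key y hy]
  have hbiU2 : P1 ∪ (univ.filter (Sum.elim (fun _ => (n-1) % 4 ≠ 3)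
      (fun j : Fin (n-1) => (n-1) % 4 = 3 ∧ j.val = (n-1) - 4))).biUnion
      (fun v => univ.filter (fun u => (wheelGraph n).Adj v u ∧ u ∉ P1)) = P2 := by
    ext w
    simp only [mem_union, mem_biUnion, mem_filter, mem_univ, true_and, hP1, hP2]
    rcases w with u | i
    · simp
    · simp only [Sum.elim_inr]
      have hi := i.isLt
      constructor
      · rintro (hp1 | ⟨v, hv, hadj, hnp⟩)
        · exact fun _ => Or.inl hp1
        · rcases v with u | jj
          · simp only [Sum.elim_inl] at hv
            exact fun h3 => absurd h3 hv
          · simp only [Sum.elim_inr] at hv hnp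
            rw [wheel_adj_rr hn] at hadj
            have hjj := jj.isLt
            unfold p2C
            unfold p1C occC at hnp ⊢
            omega
      · intro hp2
        by_cases hp1 : p1C n i.val
        · exact Or.inl hp1
        · right
          by_cases hr3 : (n-1) % 4 = 3
          · have hi3 : i.val = (n-1) - 3 := by
              rcases hp2 hr3 with h | h
              · exact absurd h hp1
              · exact h
            refine ⟨Sum.inr ⟨n-5, by omega⟩, ?_, ?_, ?_⟩
            · simp only [Sum.elim_inr, Fin.val_mk]
              exact ⟨hr3, by omega⟩
            · rw [wheel_adj_rr hn]
              simp only [Fin.val_mk]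
              have hm7 : 7 ≤ n - 1 := by omega
              omega
            · exact hp1
          · refine ⟨Sum.inl (), ?_, wheel_adj_lr _ _, ?_⟩
            · exact hr3
            · exact hp1
  have hF1F2 : F1 ∪ (univ.filter (Sum.elim (fun _ => (n-1) % 4 ≠ 3)
      (fun j : Fin (n-1) => (n-1) % 4 = 3 ∧ j.val = (n-1) - 4))) = F2 := by
    ext v
    simp only [mem_union, mem_filter, mem_univ, true_and, hF1, hF2]
    rcases v with u | j
    · simp only [Sum.elim_inl]
      tauto
    · simp only [Sum.elim_inr]
      unfold f2C pairC
      tauto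
  have hC2 : dedStep (wheelGraph n) (wheelL n) (P1, F1) = (P2, F2) := by
    rw [hstep P1 F1, hfire2, hbiU2, hF1F2]
  have hiter2 : (dedStep (wheelGraph n) (wheelL n))^[2]
      (univ.filter (fun v => 0 < wheelL n v), ∅) = (P2, F2) := by
    rw [hC0]
    show dedStep (wheelGraph n) (wheelL n) (dedStep (wheelGraph n) (wheelL n) (P0, ∅)) = (P2, F2)
    rw [hC1, hC2]
  by_cases hr : (n-1) % 4 = 3
  · refine ⟨3, ?_⟩
    show ((dedStep (wheelGraph n) (wheelL n))^[3] (univ.filter (fun v => 0 < wheelL n v), ∅)).1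
      = univ
    rw [show (3:ℕ) = 2+1 from rfl, Function.iterate_succ_apply', hiter2]
    have hubP2 : (Sum.inl () : Unit ⊕ Fin (n-1)) ∈ P2 := by
      simp only [hP2, mem_filter, mem_univ, true_and, Sum.elim_inl]
    have hubcard : (univ.filter
        (fun u => (wheelGraph n).Adj (Sum.inl ()) u ∧ u ∉ P2)).card ≤ 1 := by
      rw [card_le_one]
      have key : ∀ x, (wheelGraph n).Adj (Sum.inl ()) x ∧ x ∉ P2 →
          x = Sum.inr (⟨n - 3, by omega⟩ : Fin (n-1)) := by
        rintro (u' | i) ⟨hadj, hnp⟩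
        · exact absurd hubP2 (by cases u'; exact hnp)
        · simp only [hP2, mem_filter, mem_univ, true_and, Sum.elim_inr] at hnp
          unfold p2C p1C occC at hnp
          push_neg at hnp
          have hi := i.isLt
          simp only [Sum.inr.injEq, Fin.ext_iff, Fin.val_mk]
          omega
      intro x hx y hy
      simp only [mem_filter, mem_univ, true_and] at hx hy
      rw [key x hx, key y hy]
    have hubfire : (Sum.inl () : Unit ⊕ Fin (n-1)) ∈ univ.filter
        (fun v => 0 < wheelL n v ∧ v ∉ F2 ∧
          (univ.filter (fun u => (wheelGraph n).Adj v u ∧ u ∉ P2)).card ≤ wheelL n v) := by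
      rw [mem_filter]
      refine ⟨mem_univ _, by simp only [wheelL, Sum.elim_inl]; split_ifs <;> omega, ?_, ?_⟩
      · simp only [hF2, mem_filter, mem_univ, true_and, Sum.elim_inl, ne_eq, not_not]
        exact hr
      · have hL1 : wheelL n (Sum.inl ()) = 1 := by
          simp only [wheelL, Sum.elim_inl]
          rw [if_neg (by omega)]
        rw [hL1]
        exact hubcard
    rw [hstep P2 F2]
    dsimp only
    rw [Finset.eq_univ_iff_forall]
    intro w
    rw [mem_union]
    rcases w with u | i
    · left
      cases u
      exact hubP2
    · by_cases hp2 : p2C n i.val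
      · left
        simp only [hP2, mem_filter, mem_univ, true_and, Sum.elim_inr]
        exact hp2
      · right
        rw [mem_biUnion]
        refine ⟨Sum.inl (), hubfire, ?_⟩
        rw [mem_filter]
        refine ⟨mem_univ _, wheel_adj_lr _ _, ?_⟩
        simp only [hP2, mem_filter, mem_univ, true_and, Sum.elim_inr]
        exact hp2
  · refine ⟨2, ?_⟩
    show ((dedStep (wheelGraph n) (wheelL n))^[2] (univ.filter (fun v => 0 < wheelL n v), ∅)).1
      = univ
    rw [hiter2]
    show P2 = univ
    ext v
    simp only [hP2, mem_filter, mem_univ, true_and, iff_true]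
    rcases v with u | j
    · simp
    · simp only [Sum.elim_inr, p2C]
      intro h3
      exact absurd h3 hr

end DedAux

open DedAux in
theorem deduction_wheelGraph (n : ℕ) (hn : 5 ≤ n) :
    deductionNumber (wheelGraph n) = (n + 1) / 2 := by
  have hdef : deductionNumber (wheelGraph n) = sInf {k | ∃ L : (Unit ⊕ Fin (n-1)) → ℕ,
      (∑ v, L v) = k ∧
      @DedSuccessful _ _ (Classical.decEq _) (wheelGraph n) (Classical.decRel _) L} := rfl
  rw [hdef]
  have hmem : (n+1)/2 ∈ {k | ∃ L : (Unit ⊕ Fin (n-1)) → ℕ, (∑ v, L v) = k ∧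
      @DedSuccessful _ _ (Classical.decEq _) (wheelGraph n) (Classical.decRel _) L} :=
    ⟨wheelL n, wheelL_sum hn, @wheel_success n hn (Classical.decEq _) (Classical.decRel _)⟩
  apply le_antisymm
  · exact Nat.sInf_le hmem
  · apply le_csInf ⟨(n+1)/2, hmem⟩
    intro s hs
    obtain ⟨L, hsum, hL⟩ := hs
    clear hdef hmem
    have h1 := @ded_lower _ _ (Classical.decEq _) (wheelGraph n) (Classical.decRel _) L hL
    rw [← hsum]
    have h2 : Fintype.card (Unit ⊕ Fin (n-1)) = n := by
      simp only [Fintype.card_sum, Fintype.card_unit, Fintype.card_fin]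
      omega
    omega
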